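/- arXiv:2008.00845 — 3 statements merged into one kernel-verified Lean document; each statement's English description precedes it below -/
import Mathlib

section
/- Let μ be a Borel probability measure on the closed unit disk, b ∈ ℓ¹(ℕ), and suppose |∫ f_b dμ| = sup_{|z|≤1} |f_b(z)|, where f_b is the continuous function given by the power series with coefficients b, and f_b is non-constant. Then μ is supported on the unit circle, and there exists β ∈ ℂ with |β| = sup_{|z|≤1} |f_b(z)| ≠ 0 such that f_b(t) = β for μ-almost every t (equivalently for all t in the support of μ). -/
open MeasureTheory

/-- If a probability measure `μ` on the closed unit disk satisfies
`|∫ f_b dμ| = sup_{|z|≤1} |f_b|` for a non-constant `f_b` with `b ∈ ℓ¹`, then `μ` is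
supported on the unit circle and `f_b` is a.e. equal to a constant `β` of maximal modulus. -/
theorem stmt7 (μ : Measure ℂ) [IsProbabilityMeasure μ]
    (hμ : μ (Metric.closedBall 0 1)ᶜ = 0)
    (b : ℕ → ℂ) (hb : Summable fun n => ‖b n‖)
    (f : ℂ → ℂ) (hf : ∀ z, f z = ∑' n : ℕ, b n * z ^ n)
    (hnc : ∃ z w : ℂ, ‖z‖ < 1 ∧ ‖w‖ < 1 ∧ f z ≠ f w)
    (M : ℝ) (hM : M = ⨆ z : Metric.closedBall (0 : ℂ) 1, ‖f z‖)
    (hatt : ‖∫ z, f z ∂μ‖ = M) :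
    (∀ᵐ t ∂μ, ‖t‖ = 1) ∧
    ∃ β : ℂ, ‖β‖ = M ∧ β ≠ 0 ∧ ∀ᵐ t ∂μ, f t = β := by
  set S := Metric.closedBall (0 : ℂ) 1 with hS
  -- a.e. membership in the closed ball
  have haeS : ∀ᵐ t ∂μ, t ∈ S := by
    rw [ae_iff]
    simpa [Set.compl_def] using hμ
  -- bound for the terms of the series on the closed ball
  have hterm : ∀ (n : ℕ) (z : ℂ), z ∈ S → ‖b n * z ^ n‖ ≤ ‖b n‖ := by
    intro n z hz
    rw [mem_closedBall_zero_iff] at hz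
    rw [norm_mul, norm_pow]
    calc ‖b n‖ * ‖z‖ ^ n ≤ ‖b n‖ * 1 ^ n := by
          gcongr
      _ = ‖b n‖ := by simp
  -- continuity on the closed ball
  have hcont : ContinuousOn f S := by
    have h1 : ContinuousOn (fun z : ℂ => ∑' n : ℕ, b n * z ^ n) S :=
      continuousOn_tsum (fun n => (continuousOn_const.mul (continuousOn_pow n))) hb hterm
    exact h1.congr fun z _ => hf z
  -- differentiability on the open ball
  have hdiff : DifferentiableOn ℂ f (Metric.ball (0 : ℂ) 1) := by
    have h1 : DifferentiableOn ℂ (fun z : ℂ => ∑' n : ℕ, b n * z ^ n) (Metric.ball (0 : ℂ) 1) :=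
      Complex.differentiableOn_tsum_of_summable_norm hb
        (fun n => (differentiable_const _).mul (differentiable_pow n) |>.differentiableOn)
        Metric.isOpen_ball
        (fun n w hw => hterm n w (Metric.ball_subset_closedBall hw))
    exact h1.congr fun z hz => hf z
  -- boundedness of the range used for the sup
  have hbdd : BddAbove (Set.range fun z : S => ‖f z‖) := by
    have h := ((isCompact_closedBall (0 : ℂ) 1).image_of_continuousOn hcont.norm).bddAbove
    rwa [Set.image_eq_range] at h
  have hle : ∀ z ∈ S, ‖f z‖ ≤ M := fun z hz => hM ▸ le_ciSup hbdd (⟨z, hz⟩ : S)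
  obtain ⟨z₁, z₂, hz₁, hz₂, hne⟩ := hnc
  have hz₁b : z₁ ∈ Metric.ball (0 : ℂ) 1 := mem_ball_zero_iff.mpr hz₁
  have hz₂b : z₂ ∈ Metric.ball (0 : ℂ) 1 := mem_ball_zero_iff.mpr hz₂
  -- M is positive
  have hMpos : 0 < M := by
    by_contra h
    push_neg at h
    have h1 : ‖f z₁‖ ≤ 0 := (hle z₁ (Metric.ball_subset_closedBall hz₁b)).trans h
    have h2 : ‖f z₂‖ ≤ 0 := (hle z₂ (Metric.ball_subset_closedBall hz₂b)).trans h
    have e1 : f z₁ = 0 := norm_le_zero_iff.mp h1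
    have e2 : f z₂ = 0 := norm_le_zero_iff.mp h2
    exact hne (e1.trans e2.symm)
  -- strict maximum modulus inside the ball
  have hstrict : ∀ z ∈ Metric.ball (0 : ℂ) 1, ‖f z‖ < M := by
    intro z hz
    rcases (hle z (Metric.ball_subset_closedBall hz)).lt_or_eq with h | h
    · exact h
    exfalso
    have hmax : IsMaxOn (norm ∘ f) (Metric.ball (0 : ℂ) 1) z := by
      intro w hw
      have : ‖f w‖ ≤ M := hle w (Metric.ball_subset_closedBall hw)
      simpa [h] using this
    have hconst := Complex.eqOn_of_isPreconnected_of_isMaxOn_norm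
      (convex_ball (0 : ℂ) 1).isPreconnected Metric.isOpen_ball hdiff hz hmax
    have e1 : f z₁ = f z := hconst hz₁b
    have e2 : f z₂ = f z := hconst hz₂b
    exact hne (e1.trans e2.symm)
  -- measurability and integrability
  have hrestr : μ.restrict S = μ := Measure.restrict_eq_self_of_ae_mem haeS
  have hmeas : AEStronglyMeasurable f μ := by
    rw [← hrestr]
    exact hcont.aestronglyMeasurable measurableSet_closedBall
  have hbound : ∀ᵐ t ∂μ, ‖f t‖ ≤ M := haeS.mono fun t ht => hle t ht
  have hint : Integrable f μ := Integrable.mono' (integrable_const M) hmeas hbound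
  set β : ℂ := ∫ z, f z ∂μ with hβdef
  have hβ : ‖β‖ = M := hatt
  have hβne : β ≠ 0 := by
    intro h
    rw [h, norm_zero] at hβ
    exact hMpos.ne hβ
  -- the real part function
  set φ : ℂ → ℝ := fun t => ((starRingEnd ℂ) β * f t).re with hφdef
  have hgint : Integrable (fun t => (starRingEnd ℂ) β * f t) μ := hint.const_mul _
  have hφint : Integrable φ μ := hgint.re
  have hφval : ∫ t, φ t ∂μ = M ^ 2 := by
    rw [hφdef]
    have hre := integral_re hgint
    rw [RCLike.re_eq_complex_re] at hre
    simp only []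
    rw [hre, integral_const_mul, ← hβdef, mul_comm ((starRingEnd ℂ) β) β, Complex.mul_conj]
    rw [Complex.ofReal_re, Complex.normSq_eq_norm_sq, hβ]
  have hφle : ∀ᵐ t ∂μ, φ t ≤ M ^ 2 := by
    refine hbound.mono fun t ht => ?_
    calc φ t ≤ ‖(starRingEnd ℂ) β * f t‖ := by
          exact Complex.re_le_norm _
      _ = ‖β‖ * ‖f t‖ := by rw [norm_mul, RCLike.norm_conj]
      _ ≤ M * M := by rw [hβ]; exact mul_le_mul_of_nonneg_left ht hMpos.le
      _ = M ^ 2 := (sq M).symm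
  -- equality a.e.
  have hφeq : ∀ᵐ t ∂μ, φ t = M ^ 2 := by
    have hnn : 0 ≤ᵐ[μ] fun t => M ^ 2 - φ t := hφle.mono fun t ht => sub_nonneg.mpr ht
    have hint2 : Integrable (fun t => M ^ 2 - φ t) μ := (integrable_const _).sub hφint
    have hzero : ∫ t, (M ^ 2 - φ t) ∂μ = 0 := by
      rw [integral_sub (integrable_const _) hφint, hφval, integral_const]
      simp
    have := (integral_eq_zero_iff_of_nonneg_ae hnn hint2).mp hzero
    filter_upwards [this] with t ht
    have : M ^ 2 - φ t = 0 := ht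
    linarith
  -- a.e. f t = β and ‖f t‖ = M
  have hkey : ∀ᵐ t ∂μ, f t = β ∧ ‖f t‖ = M := by
    filter_upwards [hφeq, hbound] with t hφt hbt
    have hre : ((starRingEnd ℂ) β * f t).re = M ^ 2 := hφt
    have hnorm : ‖f t‖ = M := by
      have h1 : M ^ 2 ≤ ‖β‖ * ‖f t‖ := by
        rw [← hre]
        calc ((starRingEnd ℂ) β * f t).re ≤ ‖(starRingEnd ℂ) β * f t‖ := by
              exact Complex.re_le_norm _
          _ = ‖β‖ * ‖f t‖ := by rw [norm_mul, RCLike.norm_conj]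
      rw [hβ] at h1
      have h2 : M ≤ ‖f t‖ := by
        nlinarith
      linarith
    refine ⟨?_, hnorm⟩
    have hns : Complex.normSq (f t - β) = 0 := by
      rw [Complex.normSq_sub]
      have e1 : Complex.normSq (f t) = M ^ 2 := by
        rw [Complex.normSq_eq_norm_sq, hnorm]
      have e2 : Complex.normSq β = M ^ 2 := by
        rw [Complex.normSq_eq_norm_sq, hβ]
      have e3 : (f t * (starRingEnd ℂ) β).re = M ^ 2 := by
        rw [mul_comm]; exact hre
      rw [e1, e2, e3]; ring
    exact sub_eq_zero.mp (Complex.normSq_eq_zero.mp hns)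
  constructor
  · filter_upwards [hkey, haeS] with t ht htS
    have h1 : ‖t‖ ≤ 1 := mem_closedBall_zero_iff.mp htS
    by_contra h
    have h2 : ‖t‖ < 1 := lt_of_le_of_ne h1 h
    exact (hstrict t (mem_ball_zero_iff.mpr h2)).ne ht.2
  · exact ⟨β, hβ, hβne, hkey.mono fun t ht => ht.1⟩
end

section
/- (Bernstein) If f is analytic on the open unit disk, continuous on the closed disk, and its boundary values satisfy a Hölder condition of order α > 1/2 (|f(z) − f(w)| ≤ C|z − w|^α for z, w on the closed disk), then the Taylor coefficients of f are absolutely summable, i.e., f belongs to the Wiener algebra W⁺. -/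
open Complex Finset Real

lemma exp_geom_sum (M : ℕ) (hM : 0 < M) (d : ℤ) (hd : d.natAbs < M) :
    ∑ k ∈ Finset.range M, Complex.exp (2 * (π : ℂ) * I * d / M) ^ k
      = if d = 0 then (M : ℂ) else 0 := by
  rcases eq_or_ne d 0 with rfl | hd0
  · simp
  · rw [if_neg hd0]
    have hM0 : (M : ℂ) ≠ 0 := Nat.cast_ne_zero.2 hM.ne'
    have h2 : (2 : ℂ) * (π : ℂ) * I ≠ 0 := by
      simp [Real.pi_ne_zero, Complex.I_ne_zero, Complex.ofReal_ne_zero]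
    have hw1 : Complex.exp (2 * (π : ℂ) * I * d / M) ≠ 1 := by
      intro h
      rw [Complex.exp_eq_one_iff] at h
      obtain ⟨t, ht⟩ := h
      have hdt : (d : ℂ) = t * M := by
        have hne := h2
        field_simp at ht
        -- ht should say 2 π I d = t * (2 π I) * M
        linear_combination ht
      have hdt' : d = t * M := by exact_mod_cast hdt
      rcases eq_or_ne t 0 with rfl | ht0
      · simp at hdt'; exact hd0 hdt'
      · have : (M : ℤ) ≤ d.natAbs := by
          rw [hdt']
          calc (M : ℤ) = 1 * M := (one_mul _).symm
          _ ≤ |t| * M := by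
              apply mul_le_mul_of_nonneg_right _ (by positivity)
              exact Int.one_le_abs ht0
          _ = |t * M| := by rw [abs_mul]; simp
          _ = (t * M).natAbs := (Int.abs_eq_natAbs _)
        omega
    rw [geom_sum_eq hw1]
    have hpow : Complex.exp (2 * (π : ℂ) * I * d / M) ^ M = 1 := by
      rw [← Complex.exp_nat_mul]
      have harg : (M : ℂ) * (2 * (π : ℂ) * I * d / M) = d * (2 * (π : ℂ) * I) := by
        field_simp
      rw [harg, Complex.exp_int_mul_two_pi_mul_I]
    rw [hpow, sub_self, zero_div]

lemma key_prod (M k n m : ℕ) :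
    Complex.exp (2 * (π : ℂ) * I * k / M) ^ n
      * (starRingEnd ℂ) (Complex.exp (2 * (π : ℂ) * I * k / M) ^ m)
    = Complex.exp (2 * (π : ℂ) * I * (((n : ℤ) : ℂ) - ((m : ℤ) : ℂ)) / M) ^ k := by
  rw [← Complex.exp_nat_mul, ← Complex.exp_nat_mul, ← Complex.exp_conj, ← Complex.exp_add,
    ← Complex.exp_nat_mul]
  congr 1
  have hc : (starRingEnd ℂ) ((m : ℂ) * (2 * (π : ℂ) * I * k / M)) =
      (m : ℂ) * (-(2 * (π : ℂ) * I * k / M)) := by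
    simp [map_mul, map_div₀, Complex.conj_I, map_ofNat, Complex.conj_natCast]
    ring
  rw [hc]
  push_cast
  ring

lemma dparseval_c (c : ℕ → ℂ) (M : ℕ) (hM : 0 < M) :
    ∑ k ∈ Finset.range M,
      ((∑ n ∈ Finset.range M, c n * Complex.exp (2 * (π : ℂ) * I * k / M) ^ n)
        * (starRingEnd ℂ) (∑ n ∈ Finset.range M, c n * Complex.exp (2 * (π : ℂ) * I * k / M) ^ n))
    = M * ∑ n ∈ Finset.range M, c n * (starRingEnd ℂ) (c n) := by
  have step1 : ∀ k : ℕ, ((∑ n ∈ Finset.range M, c n * Complex.exp (2 * (π : ℂ) * I * k / M) ^ n)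
        * (starRingEnd ℂ) (∑ n ∈ Finset.range M, c n * Complex.exp (2 * (π : ℂ) * I * k / M) ^ n))
      = ∑ n ∈ Finset.range M, ∑ m ∈ Finset.range M,
          (c n * (starRingEnd ℂ) (c m))
            * Complex.exp (2 * (π : ℂ) * I * (((n : ℤ) : ℂ) - ((m : ℤ) : ℂ)) / M) ^ k := by
    intro k
    rw [map_sum, Finset.sum_mul_sum]
    refine Finset.sum_congr rfl fun n _ => Finset.sum_congr rfl fun m _ => ?_
    rw [map_mul]
    linear_combination (c n * (starRingEnd ℂ) (c m)) * key_prod M k n m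
  calc ∑ k ∈ Finset.range M, ((∑ n ∈ Finset.range M, c n * Complex.exp (2 * (π : ℂ) * I * k / M) ^ n)
        * (starRingEnd ℂ) (∑ n ∈ Finset.range M, c n * Complex.exp (2 * (π : ℂ) * I * k / M) ^ n))
      = ∑ n ∈ Finset.range M, ∑ m ∈ Finset.range M, (c n * (starRingEnd ℂ) (c m)) *
          ∑ k ∈ Finset.range M,
            Complex.exp (2 * (π : ℂ) * I * (((n : ℤ) : ℂ) - ((m : ℤ) : ℂ)) / M) ^ k := by
        rw [Finset.sum_congr rfl fun k _ => step1 k, Finset.sum_comm]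
        refine Finset.sum_congr rfl fun n _ => ?_
        rw [Finset.sum_comm]
        exact Finset.sum_congr rfl fun m _ => (Finset.mul_sum _ _ _).symm
    _ = ∑ n ∈ Finset.range M, (c n * (starRingEnd ℂ) (c n)) * M := by
        refine Finset.sum_congr rfl fun n hn => ?_
        have hn' := Finset.mem_range.1 hn
        have hrw : ∀ m ∈ Finset.range M, (c n * (starRingEnd ℂ) (c m)) *
            (∑ k ∈ Finset.range M,
              Complex.exp (2 * (π : ℂ) * I * (((n : ℤ) : ℂ) - ((m : ℤ) : ℂ)) / M) ^ k)
            = if m = n then (c n * (starRingEnd ℂ) (c n)) * M else 0 := by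
          intro m hm
          have hm' := Finset.mem_range.1 hm
          have hcast : (((n : ℤ) : ℂ) - ((m : ℤ) : ℂ)) = (((n : ℤ) - (m : ℤ) : ℤ) : ℂ) := by
            push_cast; ring
          rw [hcast, exp_geom_sum M hM ((n : ℤ) - m) (by omega)]
          by_cases h : m = n
          · subst h; rw [if_pos rfl, if_pos (by omega)]
          · rw [if_neg h, if_neg (by omega), mul_zero]
        rw [Finset.sum_congr rfl hrw, Finset.sum_ite_eq' (Finset.range M) n,
          if_pos (Finset.mem_range.2 hn')]
    _ = M * ∑ n ∈ Finset.range M, c n * (starRingEnd ℂ) (c n) := by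
        rw [← Finset.sum_mul, mul_comm]

lemma dparseval (c : ℕ → ℂ) (M : ℕ) (hM : 0 < M) :
    ∑ k ∈ Finset.range M,
        ‖∑ n ∈ Finset.range M, c n * Complex.exp (2 * (π : ℂ) * I * k / M) ^ n‖ ^ 2
      = M * ∑ n ∈ Finset.range M, ‖c n‖ ^ 2 := by
  have h := dparseval_c c M hM
  simp only [RCLike.mul_conj] at h
  apply Complex.ofReal_injective
  push_cast
  convert h using 2 <;> rfl

lemma parseval_bound (b : ℕ → ℂ) (r B : ℝ) (hr0 : 0 ≤ r) (hB0 : 0 ≤ B)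
    (hsum : Summable fun n => ‖b n‖ * r ^ n)
    (hB : ∀ z : ℂ, ‖z‖ = r → ‖∑' n, b n * z ^ n‖ ≤ B) (N : ℕ) :
    ∑ n ∈ Finset.range N, ‖b n‖ ^ 2 * r ^ (2 * n) ≤ B ^ 2 := by
  set ε : ℕ → ℝ := fun M => ∑' i, ‖b (i + M)‖ * r ^ (i + M) with hε
  have hε0 : ∀ M, 0 ≤ ε M := fun M => tsum_nonneg fun i => by positivity
  have hεto : Filter.Tendsto ε Filter.atTop (nhds 0) :=
    tendsto_sum_nat_add (fun n => ‖b n‖ * r ^ n)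
  have key : ∀ M, N ≤ M → 0 < M →
      ∑ n ∈ Finset.range N, ‖b n‖ ^ 2 * r ^ (2 * n) ≤ (B + ε M) ^ 2 := by
    intro M hNM hM
    have hstep1 : ∑ n ∈ Finset.range N, ‖b n‖ ^ 2 * r ^ (2 * n)
        ≤ ∑ n ∈ Finset.range M, ‖b n‖ ^ 2 * r ^ (2 * n) :=
      Finset.sum_le_sum_of_subset_of_nonneg (Finset.range_subset_range.2 hNM)
        (fun i _ _ => by positivity)
    refine hstep1.trans ?_
    -- rewrite as norms of c n = b n * r^n
    set c : ℕ → ℂ := fun n => b n * (r : ℂ) ^ n with hc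
    have hcn : ∀ n, ‖c n‖ ^ 2 = ‖b n‖ ^ 2 * r ^ (2 * n) := by
      intro n
      rw [hc]
      simp only [norm_mul, norm_pow, Complex.norm_real, Real.norm_eq_abs, _root_.abs_of_nonneg hr0]
      rw [mul_pow, ← pow_mul, mul_comm n 2]
    have hdp := dparseval c M hM
    -- bound each circle value
    have hcirc : ∀ k : ℕ,
        ‖∑ n ∈ Finset.range M, c n * Complex.exp (2 * (π : ℂ) * I * k / M) ^ n‖ ≤ B + ε M := by
      intro k
      set z : ℂ := (r : ℂ) * Complex.exp (2 * (π : ℂ) * I * k / M) with hz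
      have hzn : ‖z‖ = r := by
        rw [hz, norm_mul, Complex.norm_real, Real.norm_eq_abs, _root_.abs_of_nonneg hr0]
        have : ‖Complex.exp (2 * (π : ℂ) * I * k / M)‖ = 1 := by
          rw [Complex.norm_exp]
          have : (2 * (π : ℂ) * I * k / M).re = 0 := by
            have : (2 * (π : ℂ) * I * k / M) = ((2 * π * k / M : ℝ)) * I := by
              push_cast; ring
            rw [this]
            simp
          rw [this, Real.exp_zero]
        rw [this, mul_one]
      have hfz : Summable fun n => b n * z ^ n := by
        apply Summable.of_norm
        have : ∀ n, ‖b n * z ^ n‖ = ‖b n‖ * r ^ n := by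
          intro n; rw [norm_mul, norm_pow, hzn]
        simpa only [this] using hsum
      have heq : ∀ n, c n * Complex.exp (2 * (π : ℂ) * I * k / M) ^ n = b n * z ^ n := by
        intro n; rw [hc, hz, mul_pow]; ring
      have hsplit := Summable.sum_add_tsum_nat_add (f := fun n => b n * z ^ n) M hfz
      have : ∑ n ∈ Finset.range M, c n * Complex.exp (2 * (π : ℂ) * I * k / M) ^ n
          = (∑' n, b n * z ^ n) - ∑' i, b (i + M) * z ^ (i + M) := by
        rw [Finset.sum_congr rfl fun n _ => heq n, eq_sub_iff_add_eq, hsplit]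
      rw [this]
      refine (norm_sub_le _ _).trans (add_le_add (hB z hzn) ?_)
      have htail : Summable fun i => ‖b (i + M) * z ^ (i + M)‖ := by
        have : ∀ i, ‖b (i + M) * z ^ (i + M)‖ = ‖b (i + M)‖ * r ^ (i + M) := by
          intro i; rw [norm_mul, norm_pow, hzn]
        rw [funext this]
        exact (summable_nat_add_iff M).2 hsum
      refine (norm_tsum_le_tsum_norm htail).trans ?_
      rw [hε]
      refine le_of_eq (tsum_congr fun i => ?_)
      rw [norm_mul, norm_pow, hzn]
    -- combine
    have hsum_le : ∑ k ∈ Finset.range M,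
        ‖∑ n ∈ Finset.range M, c n * Complex.exp (2 * (π : ℂ) * I * k / M) ^ n‖ ^ 2
        ≤ M * (B + ε M) ^ 2 := by
      calc _ ≤ ∑ _k ∈ Finset.range M, (B + ε M) ^ 2 :=
            Finset.sum_le_sum fun k _ => pow_le_pow_left₀ (norm_nonneg _) (hcirc k) 2
        _ = M * (B + ε M) ^ 2 := by rw [Finset.sum_const, Finset.card_range, nsmul_eq_mul]
    rw [← Finset.sum_congr rfl fun n _ => (hcn n)]
    have hM' : (0 : ℝ) < M := by exact_mod_cast hM
    have := hdp ▸ hsum_le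
    exact le_of_mul_le_mul_left (by linarith [this]) hM'
  have htendsto : Filter.Tendsto (fun M => (B + ε M) ^ 2) Filter.atTop (nhds (B ^ 2)) := by
    have h1 : Filter.Tendsto (fun M => B + ε M) Filter.atTop (nhds (B + 0)) :=
      hεto.const_add B
    rw [add_zero] at h1
    exact h1.pow 2
  refine ge_of_tendsto htendsto ?_
  filter_upwards [Filter.eventually_ge_atTop (max N 1)] with M hM
  exact key M (le_trans (le_max_left _ _) hM) (lt_of_lt_of_le (lt_of_lt_of_le Nat.one_pos (le_max_right _ _)) hM)

lemma normSq_exp_sub_one (t : ℝ) :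
    ‖Complex.exp ((t : ℂ) * I) - 1‖ ^ 2 = 2 - 2 * Real.cos t := by
  rw [Complex.exp_mul_I]
  have : (Complex.cos t + Complex.sin t * I - 1)
      = Complex.mk (Real.cos t - 1) (Real.sin t) := by
    apply Complex.ext <;>
      simp [Complex.cos_ofReal_re, Complex.sin_ofReal_re, Complex.add_re, Complex.add_im]
  rw [this, Complex.sq_norm, Complex.normSq_mk]
  nlinarith [Real.sin_sq_add_cos_sq t]

lemma norm_exp_sub_one_le (t : ℝ) : ‖Complex.exp ((t : ℂ) * I) - 1‖ ≤ |t| := by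
  have h1 := normSq_exp_sub_one t
  have h2 : 1 - t ^ 2 / 2 ≤ Real.cos t := Real.one_sub_sq_div_two_le_cos
  have h3 : ‖Complex.exp ((t : ℂ) * I) - 1‖ ^ 2 ≤ |t| ^ 2 := by
    rw [h1, _root_.sq_abs]; nlinarith
  exact (abs_le_of_sq_le_sq' h3 (abs_nonneg t)).2

lemma one_le_normSq_exp_sub_one {t : ℝ} (h1 : 2 * π / 3 ≤ t) (h2 : t ≤ 4 * π / 3) :
    1 ≤ ‖Complex.exp ((t : ℂ) * I) - 1‖ ^ 2 := by
  rw [normSq_exp_sub_one]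
  have hcos : Real.cos t ≤ -(1/2) := by
    have habs : |t - π| ≤ π / 3 := by
      rw [abs_le]; constructor <;> [linarith; linarith]
    have h3 : Real.cos (π / 3) ≤ Real.cos |t - π| :=
      Real.cos_le_cos_of_nonneg_of_le_pi (abs_nonneg _)
        (by linarith [Real.pi_pos]) habs
    rw [Real.cos_abs, Real.cos_sub_pi, Real.cos_pi_div_three] at h3
    linarith
  linarith

lemma rpow_block_identity (C α : ℝ) (m : ℕ) :
    (2:ℝ) ^ m * (C * ((2 * π / 3) * ((2:ℝ) ^ m)⁻¹) ^ α) ^ 2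
      = (C * (2 * π / 3) ^ α * ((2:ℝ) ^ ((1:ℝ) / 2 - α)) ^ m) ^ 2 := by
  have hπ : (0:ℝ) < 2 * π / 3 := by positivity
  have h2 : (0:ℝ) ≤ 2 := by norm_num
  rw [← Real.rpow_natCast (2:ℝ) m]
  rw [← Real.rpow_neg h2 (m : ℝ)]
  rw [Real.mul_rpow hπ.le (Real.rpow_nonneg h2 _)]
  rw [← Real.rpow_natCast ((2:ℝ) ^ ((1:ℝ) / 2 - α)) m, ← Real.rpow_mul h2]
  rw [← Real.rpow_mul h2]
  have hkey : (2:ℝ) ^ (m:ℝ) * ((2:ℝ) ^ (-(m:ℝ) * α)) ^ 2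
      = ((2:ℝ) ^ (((1:ℝ)/2 - α) * (m:ℝ))) ^ 2 := by
    rw [← Real.rpow_natCast ((2:ℝ) ^ (-(m:ℝ) * α)) 2, ← Real.rpow_mul h2,
      ← Real.rpow_natCast ((2:ℝ) ^ (((1:ℝ)/2 - α) * (m:ℝ))) 2, ← Real.rpow_mul h2,
      ← Real.rpow_add (by norm_num : (0:ℝ) < 2)]
    congr 1; push_cast; ring
  linear_combination (C ^ 2 * ((2 * π / 3) ^ α) ^ 2) * hkey

open Filter
open scoped NNReal ENNReal

set_option maxHeartbeats 1000000 in
/-- (Bernstein) An analytic function on the unit disk, continuous on the closed disk and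
Hölder of order `α > 1/2` there, has absolutely summable Taylor coefficients, i.e. lies in
the Wiener algebra `W⁺`. -/
theorem stmt14 (f : ℂ → ℂ) (α C : ℝ) (hα : 1 / 2 < α) (hα1 : α ≤ 1)
    (hd : DifferentiableOn ℂ f (Metric.ball 0 1))
    (hc : ContinuousOn f (Metric.closedBall 0 1))
    (hHolder : ∀ z ∈ Metric.closedBall (0 : ℂ) 1, ∀ w ∈ Metric.closedBall (0 : ℂ) 1,
      ‖f z - f w‖ ≤ C * ‖z - w‖ ^ α) :
    ∃ a : ℕ → ℂ, Summable (fun n => ‖a n‖) ∧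
      ∀ z ∈ Metric.ball (0 : ℂ) 1, f z = ∑' n : ℕ, a n * z ^ n := by
  -- power series representation
  have hps := Complex.hasFPowerSeriesOnBall_of_differentiable_off_countable
      (R := 1) (c := 0) (f := f) (s := ∅) Set.countable_empty
      (by simpa using hc)
      (fun z hz => hd.differentiableAt (Metric.isOpen_ball.mem_nhds (by simpa using hz.1)))
      one_pos
  set p := cauchyPowerSeries f 0 ((1 : ℝ≥0) : ℝ) with hp
  set a : ℕ → ℂ := fun n => p.coeff n with ha
  have hrep : ∀ z ∈ Metric.ball (0 : ℂ) 1, HasSum (fun n => a n * z ^ n) (f z) := by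
    intro z hz
    have hz' : z ∈ EMetric.ball (0 : ℂ) ((1 : ℝ≥0) : ℝ≥0∞) := by
      show z ∈ Metric.eball _ _
      rw [mem_emetric_ball_zero_iff]
      rw [Metric.mem_ball, dist_zero_right] at hz
      exact_mod_cast hz
    have hs := hps.hasSum hz'
    rw [zero_add] at hs
    refine hs.congr_fun fun n => ?_
    rw [FormalMultilinearSeries.apply_eq_pow_smul_coeff, smul_eq_mul, mul_comm]
  have hsumr : ∀ r : ℝ, 0 ≤ r → r < 1 → Summable (fun n => ‖a n‖ * r ^ n) := by
    intro r h0 h1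
    set rn : ℝ≥0 := ⟨r, h0⟩ with hrn
    have hlt : (rn : ℝ≥0∞) < p.radius := by
      refine lt_of_lt_of_le ?_ hps.r_le
      rw [ENNReal.coe_lt_coe]
      exact_mod_cast h1
    have := p.summable_norm_mul_pow hlt
    refine this.congr fun n => ?_
    rw [FormalMultilinearSeries.norm_apply_eq_norm_coef]
    rfl
  have hC0 : 0 ≤ C := by
    have h01 := hHolder 1 (by simp) 0 (by simp)
    simp only [sub_zero, norm_one, Real.one_rpow, mul_one] at h01
    exact le_trans (norm_nonneg _) h01
  -- ℓ² block estimate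
  have block : ∀ h : ℝ, 0 < h → ∀ N : ℕ,
      ∑ n ∈ Finset.range N, ‖a n‖ ^ 2 * ‖Complex.exp ((((n : ℝ) * h : ℝ)) * I) - 1‖ ^ 2
        ≤ (C * h ^ α) ^ 2 := by
    intro h hh N
    set b : ℕ → ℂ := fun n => a n * (Complex.exp ((((n : ℝ) * h : ℝ) : ℂ) * I) - 1) with hb
    have hbnorm : ∀ n, ‖b n‖ ^ 2
        = ‖a n‖ ^ 2 * ‖Complex.exp ((((n : ℝ) * h : ℝ) : ℂ) * I) - 1‖ ^ 2 := by
      intro n; rw [hb]; rw [norm_mul, mul_pow]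
    have hexp2 : ∀ t : ℝ, ‖Complex.exp ((t : ℂ) * I) - 1‖ ≤ 2 := by
      intro t
      refine (norm_sub_le _ _).trans ?_
      have : ‖Complex.exp ((t : ℂ) * I)‖ = 1 := by
        rw [Complex.norm_exp]
        simp
      rw [this, norm_one]; norm_num
    have hbound : ∀ n, ‖b n‖ ≤ 2 * ‖a n‖ := by
      intro n
      rw [hb, norm_mul, mul_comm (2:ℝ)]
      exact mul_le_mul_of_nonneg_left (hexp2 _) (norm_nonneg _)
    have Bnn : 0 ≤ C * h ^ α := by positivity
    have hrB : ∀ r : ℝ, 0 ≤ r → r < 1 →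
        ∑ n ∈ Finset.range N, ‖b n‖ ^ 2 * r ^ (2 * n) ≤ (C * h ^ α) ^ 2 := by
      intro r hr0 hr1
      refine parseval_bound b r _ hr0 Bnn ?_ ?_ N
      · refine Summable.of_nonneg_of_le (fun n => by positivity) (fun n => ?_)
          ((hsumr r hr0 hr1).mul_left 2)
        calc ‖b n‖ * r ^ n ≤ (2 * ‖a n‖) * r ^ n :=
              mul_le_mul_of_nonneg_right (hbound n) (by positivity)
          _ = 2 * (‖a n‖ * r ^ n) := by ring
      · intro z hz
        have hz1 : ‖z‖ < 1 := hz ▸ hr1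
        set w : ℂ := Complex.exp ((h : ℂ) * I) with hw
        have hwn : ‖w‖ = 1 := by
          rw [hw, Complex.norm_exp]
          simp
        have hzw : ‖z * w‖ = ‖z‖ := by rw [norm_mul, hwn, mul_one]
        have hmem1 : z ∈ Metric.ball (0 : ℂ) 1 := by
          rwa [Metric.mem_ball, dist_zero_right]
        have hmem2 : z * w ∈ Metric.ball (0 : ℂ) 1 := by
          rw [Metric.mem_ball, dist_zero_right, hzw]; exact hz1
        have h1 := hrep (z * w) hmem2
        have h2 := hrep z hmem1
        have hterm : ∀ n, b n * z ^ n = a n * (z * w) ^ n - a n * z ^ n := by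
          intro n
          simp only [hb, hw]
          have hexpn : Complex.exp ((((n : ℝ) * h : ℝ) : ℂ) * I)
              = (Complex.exp ((h : ℂ) * I)) ^ n := by
            rw [← Complex.exp_nat_mul]; congr 1; push_cast; ring
          rw [hexpn, mul_pow]
          ring
        have h3 : HasSum (fun n => b n * z ^ n) (f (z * w) - f z) := by
          rw [show (fun n => b n * z ^ n)
            = fun n => a n * (z * w) ^ n - a n * z ^ n from funext hterm]
          exact h1.sub h2
        rw [h3.tsum_eq]
        have hH := hHolder (z * w)
          (by rw [Metric.mem_closedBall, dist_zero_right, hzw]; exact hz1.le)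
          z (by rw [Metric.mem_closedBall, dist_zero_right]; exact hz1.le)
        refine hH.trans ?_
        refine mul_le_mul_of_nonneg_left ?_ hC0
        refine Real.rpow_le_rpow (norm_nonneg _) ?_ (by linarith)
        have hfac : z * w - z = z * (w - 1) := by ring
        rw [hfac, norm_mul]
        calc ‖z‖ * ‖w - 1‖ ≤ 1 * ‖w - 1‖ :=
              mul_le_mul_of_nonneg_right hz1.le (norm_nonneg _)
          _ = ‖w - 1‖ := one_mul _
          _ ≤ |h| := norm_exp_sub_one_le h
          _ = h := abs_of_pos hh
    have hcont : Filter.Tendsto (fun r : ℝ => ∑ n ∈ Finset.range N, ‖b n‖ ^ 2 * r ^ (2 * n))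
        (nhdsWithin 1 (Set.Iio 1))
        (nhds (∑ n ∈ Finset.range N, ‖b n‖ ^ 2 * (1 : ℝ) ^ (2 * n))) := by
      refine Filter.Tendsto.mono_left ?_ nhdsWithin_le_nhds
      exact Continuous.tendsto
        (continuous_finset_sum _ fun n _ => (continuous_const.mul (continuous_pow _))) 1
    have hev : ∀ᶠ r in nhdsWithin (1 : ℝ) (Set.Iio 1),
        ∑ n ∈ Finset.range N, ‖b n‖ ^ 2 * r ^ (2 * n) ≤ (C * h ^ α) ^ 2 := by
      filter_upwards [Ico_mem_nhdsLT_of_mem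
        (by norm_num : (1:ℝ) ∈ Set.Ioc (0:ℝ) 1)] with r hr
      exact hrB r hr.1 hr.2
    have hlim := le_of_tendsto hcont hev
    simpa only [hbnorm, one_pow, mul_one] using hlim
  -- ℓ² dyadic
  have blockA : ∀ m : ℕ, ∑ n ∈ Finset.Ico (2 ^ m) (2 ^ (m + 1)), ‖a n‖ ^ 2
      ≤ (C * ((2 * π / 3) * ((2:ℝ) ^ m)⁻¹) ^ α) ^ 2 := by
    intro m
    set hm : ℝ := (2 * π / 3) * ((2:ℝ) ^ m)⁻¹ with hhm
    have h2m : (0:ℝ) < 2 ^ m := by positivity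
    have hhm0 : 0 < hm := by rw [hhm]; positivity
    have hbk := block hm hhm0 (2 ^ (m + 1))
    refine le_trans ?_ hbk
    have hsub : Finset.Ico (2 ^ m) (2 ^ (m + 1)) ⊆ Finset.range (2 ^ (m + 1)) := by
      intro n hn; rw [Finset.mem_range]; exact (Finset.mem_Ico.1 hn).2
    refine le_trans ?_ (Finset.sum_le_sum_of_subset_of_nonneg hsub
      (fun i _ _ => by positivity))
    refine Finset.sum_le_sum fun n hn => ?_
    rw [Finset.mem_Ico] at hn
    have hn1 : (2:ℝ) ^ m ≤ (n:ℝ) := by exact_mod_cast hn.1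
    have hn2 : (n:ℝ) ≤ 2 * 2 ^ m := by
      have : (n:ℝ) < (2:ℝ) ^ (m + 1) := by exact_mod_cast hn.2
      rw [pow_succ] at this; linarith
    have hquot1 : 1 ≤ (n:ℝ) * ((2:ℝ) ^ m)⁻¹ := by
      rw [← div_eq_mul_inv, le_div_iff₀ h2m, one_mul]; exact hn1
    have hquot2 : (n:ℝ) * ((2:ℝ) ^ m)⁻¹ ≤ 2 := by
      rw [← div_eq_mul_inv, div_le_iff₀ h2m]; linarith
    have hπ3 : (0:ℝ) < 2 * π / 3 := by positivity
    have ht1 : 2 * π / 3 ≤ (n:ℝ) * hm := by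
      have : (n:ℝ) * hm = (2 * π / 3) * ((n:ℝ) * ((2:ℝ) ^ m)⁻¹) := by rw [hhm]; ring
      rw [this]
      nlinarith
    have ht2 : (n:ℝ) * hm ≤ 4 * π / 3 := by
      have : (n:ℝ) * hm = (2 * π / 3) * ((n:ℝ) * ((2:ℝ) ^ m)⁻¹) := by rw [hhm]; ring
      rw [this]
      nlinarith
    have hge1 := one_le_normSq_exp_sub_one ht1 ht2
    calc ‖a n‖ ^ 2 = ‖a n‖ ^ 2 * 1 := (mul_one _).symm
      _ ≤ ‖a n‖ ^ 2 * ‖Complex.exp ((((n : ℝ) * hm : ℝ) : ℂ) * I) - 1‖ ^ 2 :=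
          mul_le_mul_of_nonneg_left hge1 (by positivity)
  -- ℓ¹ dyadic
  set q : ℝ := (2:ℝ) ^ ((1:ℝ) / 2 - α) with hq
  set K : ℝ := C * (2 * π / 3) ^ α with hK
  have hq0 : 0 < q := Real.rpow_pos_of_pos (by norm_num) _
  have hq1 : q < 1 := by
    rw [hq]
    exact Real.rpow_lt_one_of_one_lt_of_neg (by norm_num) (by linarith)
  have hK0 : 0 ≤ K := by
    rw [hK]; positivity
  have blockB : ∀ m : ℕ, ∑ n ∈ Finset.Ico (2 ^ m) (2 ^ (m + 1)), ‖a n‖ ≤ K * q ^ m := by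
    intro m
    have hcs := sq_sum_le_card_mul_sum_sq (s := Finset.Ico (2 ^ m) (2 ^ (m + 1)))
      (f := fun n => ‖a n‖)
    have hcard : (Finset.Ico (2 ^ m) (2 ^ (m + 1))).card = 2 ^ m := by
      rw [Nat.card_Ico, pow_succ]; omega
    rw [hcard] at hcs
    have hsq : (∑ n ∈ Finset.Ico (2 ^ m) (2 ^ (m + 1)), ‖a n‖) ^ 2 ≤ (K * q ^ m) ^ 2 := by
      refine hcs.trans ?_
      have hcast : ((2 ^ m : ℕ) : ℝ) = (2:ℝ) ^ m := by push_cast; ring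
      rw [hcast]
      calc (2:ℝ) ^ m * ∑ n ∈ Finset.Ico (2 ^ m) (2 ^ (m + 1)), ‖a n‖ ^ 2
          ≤ (2:ℝ) ^ m * (C * ((2 * π / 3) * ((2:ℝ) ^ m)⁻¹) ^ α) ^ 2 :=
            mul_le_mul_of_nonneg_left (blockA m) (by positivity)
        _ = (K * q ^ m) ^ 2 := by rw [hK, hq]; exact rpow_block_identity C α m
    have hKq : 0 ≤ K * q ^ m := by positivity
    exact (abs_le_of_sq_le_sq' hsq hKq).2
  -- summability
  have hsummable : Summable (fun n => ‖a n‖) := by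
    have hpartial : ∀ M : ℕ, ∑ i ∈ Finset.range (2 ^ M), ‖a i‖
        ≤ ‖a 0‖ + K * ∑ m ∈ Finset.range M, q ^ m := by
      intro M
      induction M with
      | zero => simp
      | succ M ih =>
        have hsplit : ∑ i ∈ Finset.range (2 ^ M), ‖a i‖
            + ∑ i ∈ Finset.Ico (2 ^ M) (2 ^ (M + 1)), ‖a i‖
            = ∑ i ∈ Finset.range (2 ^ (M + 1)), ‖a i‖ := by
          rw [Finset.range_eq_Ico, Finset.range_eq_Ico]
          exact Finset.sum_Ico_consecutive (fun i => ‖a i‖) (Nat.zero_le _)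
            (Nat.pow_le_pow_right (by norm_num : 2 > 0) (Nat.le_succ M))
        rw [← hsplit]
        calc ∑ i ∈ Finset.range (2 ^ M), ‖a i‖
            + ∑ i ∈ Finset.Ico (2 ^ M) (2 ^ (M + 1)), ‖a i‖
            ≤ (‖a 0‖ + K * ∑ m ∈ Finset.range M, q ^ m) + K * q ^ M :=
              add_le_add ih (blockB M)
          _ = ‖a 0‖ + K * ∑ m ∈ Finset.range (M + 1), q ^ m := by
              rw [Finset.sum_range_succ, mul_add]; ring
    have hgeom : ∀ M : ℕ, ∑ m ∈ Finset.range M, q ^ m ≤ (1 - q)⁻¹ := by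
      intro M
      rw [← tsum_geometric_of_lt_one hq0.le hq1]
      exact Summable.sum_le_tsum (Finset.range M) (fun i _ => by positivity)
        (summable_geometric_of_lt_one hq0.le hq1)
    refine summable_of_sum_range_le (c := ‖a 0‖ + K * (1 - q)⁻¹)
      (fun n => norm_nonneg _) (fun n => ?_)
    calc ∑ i ∈ Finset.range n, ‖a i‖ ≤ ∑ i ∈ Finset.range (2 ^ n), ‖a i‖ :=
          Finset.sum_le_sum_of_subset_of_nonneg
            (Finset.range_subset_range.2 (Nat.lt_two_pow_self).le) (fun i _ _ => norm_nonneg _)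
      _ ≤ ‖a 0‖ + K * ∑ m ∈ Finset.range n, q ^ m := hpartial n
      _ ≤ ‖a 0‖ + K * (1 - q)⁻¹ :=
          add_le_add_right (mul_le_mul_of_nonneg_left (hgeom n) hK0) _
  exact ⟨a, hsummable, fun z hz => ((hrep z hz).tsum_eq).symm⟩
end

section
/- Let E ⊂ 𝕋 and b ∈ ℓ¹ be such that f_b is a weak peak function for E: f_b = β on E with β ≠ 0 and sup_{|z|≤1}|f_b(z)| = |β|. Let ν be any Borel probability measure on 𝕋 with support contained in E such that ν̂(−j) = ∫ t^j dν(t) → 0 as j → ∞. Then the sequence y = (ν̂(−j))_{j≥0} belongs to the closed convex hull S₀ in c₀ of {(λ^j)_{j≥0} : λ ∈ 𝔻}, and |⟨b, y⟩| = sup_{x ∈ S₀} |⟨b, x⟩|; i.e., b attains its supremum of modulus over S₀ at y. -/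
open MeasureTheory

namespace Stmt15Aux

open Filter Topology

local notation "C₀" => ZeroAtInftyContinuousMap ℕ ℂ

lemma norm_apply_le (f : ZeroAtInftyContinuousMap ℕ ℂ) (j : ℕ) : ‖f j‖ ≤ ‖f‖ := by
  rw [← ZeroAtInftyContinuousMap.norm_toBCF_eq_norm]
  exact f.toBCF.norm_coe_le_norm j

lemma norm_le_of_forall {f : ZeroAtInftyContinuousMap ℕ ℂ} {C : ℝ} (hC : 0 ≤ C)
    (h : ∀ j, ‖f j‖ ≤ C) : ‖f‖ ≤ C := by
  rw [← ZeroAtInftyContinuousMap.norm_toBCF_eq_norm]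
  exact (BoundedContinuousFunction.norm_le hC).mpr h

/-- The geometric sequence `(l^j)_j` as an element of `C₀(ℕ, ℂ)`, junk value `0` if `‖l‖ ≥ 1`. -/
noncomputable def geo (l : ℂ) : ZeroAtInftyContinuousMap ℕ ℂ :=
  if h : ‖l‖ < 1 then
    { toFun := fun j => l ^ j
      continuous_toFun := continuous_of_discreteTopology
      zero_at_infty' := by
        rw [Filter.cocompact_eq_cofinite, Nat.cofinite_eq_atTop]
        exact tendsto_pow_atTop_nhds_zero_of_norm_lt_one h }
  else 0

lemma geo_apply {l : ℂ} (h : ‖l‖ < 1) (j : ℕ) : geo l j = l ^ j := by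
  simp only [geo]
  rw [dif_pos h]
  rfl

lemma pow_sub_pow_norm_le {l l' : ℂ} {r : ℝ} (hr : 0 < r) (h1 : ‖l‖ ≤ r) (h2 : ‖l'‖ ≤ r) :
    ∀ j : ℕ, ‖l' ^ j - l ^ j‖ ≤ (j * r ^ j / r) * ‖l' - l‖ := by
  intro j
  induction j with
  | zero => simp
  | succ j ih =>
    have key : l' ^ (j + 1) - l ^ (j + 1) = l' * (l' ^ j - l ^ j) + (l' - l) * l ^ j := by ring
    have hl : ‖l ^ j‖ ≤ r ^ j := by
      rw [norm_pow]; exact pow_le_pow_left₀ (norm_nonneg _) h1 j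
    calc ‖l' ^ (j + 1) - l ^ (j + 1)‖
        ≤ ‖l' * (l' ^ j - l ^ j)‖ + ‖(l' - l) * l ^ j‖ := by rw [key]; exact norm_add_le _ _
      _ = ‖l'‖ * ‖l' ^ j - l ^ j‖ + ‖l' - l‖ * ‖l ^ j‖ := by rw [norm_mul, norm_mul]
      _ ≤ r * ((j * r ^ j / r) * ‖l' - l‖) + ‖l' - l‖ * r ^ j := by
          gcongr
      _ = ((j + 1 : ℕ) * r ^ (j + 1) / r) * ‖l' - l‖ := by
          field_simp
          push_cast
          ring

lemma geo_continuousOn : ContinuousOn geo (Metric.ball (0 : ℂ) 1) := by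
  intro l hl
  apply ContinuousAt.continuousWithinAt
  rw [Metric.mem_ball, dist_zero_right] at hl
  set r : ℝ := (1 + ‖l‖) / 2 with hrdef
  have hl_r : ‖l‖ < r := by rw [hrdef]; linarith
  have hr0 : 0 < r := lt_of_le_of_lt (norm_nonneg l) hl_r
  have hr1 : r < 1 := by rw [hrdef]; linarith
  obtain ⟨C, hC⟩ : ∃ C, ∀ j : ℕ, (j : ℝ) * r ^ j / r ≤ C := by
    have hsum : Summable (fun j : ℕ => (j : ℝ) * r ^ j) := by
      have := summable_pow_mul_geometric_of_norm_lt_one (R := ℝ) 1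
        (r := r) (by rw [Real.norm_eq_abs, abs_of_pos hr0]; exact hr1)
      simpa using this
    have h0 := hsum.tendsto_atTop_zero
    have hbdd := (h0.div_const r).bddAbove_range
    obtain ⟨C, hCb⟩ := hbdd
    exact ⟨C, fun j => hCb ⟨j, rfl⟩⟩
  have hC0 : 0 ≤ C := le_trans (by simp) (hC 0)
  have lip : LipschitzOnWith (Real.toNNReal C) geo (Metric.closedBall (0 : ℂ) r) := by
    apply LipschitzOnWith.of_dist_le_mul
    intro a ha c hc
    rw [Metric.mem_closedBall, dist_zero_right] at ha hc
    rw [dist_eq_norm, dist_eq_norm, Real.coe_toNNReal C hC0]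
    have ha1 : ‖a‖ < 1 := lt_of_le_of_lt ha hr1
    have hc1 : ‖c‖ < 1 := lt_of_le_of_lt hc hr1
    apply norm_le_of_forall (mul_nonneg hC0 (norm_nonneg _))
    intro j
    have hco : (geo a - geo c) j = a ^ j - c ^ j := by
      simp [geo_apply ha1, geo_apply hc1]
    rw [hco]
    calc ‖a ^ j - c ^ j‖ ≤ ((j : ℝ) * r ^ j / r) * ‖a - c‖ :=
          pow_sub_pow_norm_le hr0 hc ha j
      _ ≤ C * ‖a - c‖ := by gcongr; exact hC j
  exact (lip.continuousOn).continuousAt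
    (Metric.closedBall_mem_nhds_of_mem (by rwa [Metric.mem_ball, dist_zero_right]))

/-- Pairing with an `ℓ¹` sequence `b` as a continuous linear functional on `C₀(ℕ, ℂ)`. -/
noncomputable def pairingL (b : ℕ → ℂ) (hb : Summable fun n => ‖b n‖) :
    ZeroAtInftyContinuousMap ℕ ℂ →L[ℂ] ℂ := by
  have hbnd : ∀ (x : ZeroAtInftyContinuousMap ℕ ℂ) (n : ℕ), ‖x n * b n‖ ≤ ‖x‖ * ‖b n‖ := by
    intro x n
    rw [norm_mul]
    exact mul_le_mul_of_nonneg_right (norm_apply_le x n) (norm_nonneg _)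
  have hsummand : ∀ x : ZeroAtInftyContinuousMap ℕ ℂ, Summable fun n => x n * b n := fun x =>
    Summable.of_norm_bounded (hb.mul_left ‖x‖) (hbnd x)
  have hsumnorm : ∀ x : ZeroAtInftyContinuousMap ℕ ℂ, Summable fun n => ‖x n * b n‖ := fun x =>
    Summable.of_nonneg_of_le (fun n => norm_nonneg _) (hbnd x) (hb.mul_left ‖x‖)
  refine LinearMap.mkContinuous
    { toFun := fun x => ∑' n, x n * b n
      map_add' := ?_
      map_smul' := ?_ } (∑' n, ‖b n‖) ?_
  · intro x y
    simp only [ZeroAtInftyContinuousMap.coe_add, Pi.add_apply]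
    rw [← Summable.tsum_add (hsummand x) (hsummand y)]
    congr 1; funext n; ring
  · intro c x
    simp only [ZeroAtInftyContinuousMap.coe_smul, Pi.smul_apply, smul_eq_mul, RingHom.id_apply]
    rw [← tsum_mul_left]
    congr 1; funext n; ring
  · intro x
    simp only [LinearMap.coe_mk, AddHom.coe_mk]
    calc ‖∑' n, x n * b n‖ ≤ ∑' n, ‖x n * b n‖ := norm_tsum_le_tsum_norm (hsumnorm x)
      _ ≤ ∑' n, ‖x‖ * ‖b n‖ := Summable.tsum_le_tsum (hbnd x) (hsumnorm x) (hb.mul_left ‖x‖)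
      _ = (∑' n, ‖b n‖) * ‖x‖ := by rw [tsum_mul_left]; ring

lemma pairingL_apply (b : ℕ → ℂ) (hb : Summable fun n => ‖b n‖)
    (x : ZeroAtInftyContinuousMap ℕ ℂ) : pairingL b hb x = ∑' n, x n * b n := rfl

/-- Evaluation at `j` as a continuous linear functional on `C₀(ℕ, ℂ)`. -/
noncomputable def evalCLM (j : ℕ) : ZeroAtInftyContinuousMap ℕ ℂ →L[ℂ] ℂ :=
  LinearMap.mkContinuous
    { toFun := fun x => x j
      map_add' := fun x y => by simp
      map_smul' := fun c x => by simp } 1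
    (fun x => by simpa using norm_apply_le x j)

lemma evalCLM_apply (j : ℕ) (x : ZeroAtInftyContinuousMap ℕ ℂ) : evalCLM j x = x j := rfl

end Stmt15Aux

open Stmt15Aux

set_option maxHeartbeats 1000000 in
/-- If `f_b` is a weak peak function for `E ⊆ 𝕋` and `ν` is a Rajchman probability
measure supported in `E`, then `y = (ν̂(-j))_j` lies in `S₀` and `b` attains its supremum
of modulus over `S₀` at `y`. -/
theorem stmt15 (b : ℕ → ℂ) (hb : Summable fun n => ‖b n‖)
    (fb : ℂ → ℂ) (hfb : ∀ z, fb z = ∑' n : ℕ, b n * z ^ n)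
    (E : Set ℂ) (hE : E ⊆ Metric.sphere 0 1)
    (β : ℂ) (hβ : β ≠ 0)
    (hpeak : ∀ t ∈ E, fb t = β)
    (hsup : ∀ z : ℂ, ‖z‖ ≤ 1 → ‖fb z‖ ≤ ‖β‖)
    (ν : Measure ℂ) [IsProbabilityMeasure ν] (hν : ν Eᶜ = 0)
    (hRaj : Filter.Tendsto (fun j : ℕ => ∫ t, t ^ j ∂ν) Filter.atTop (nhds 0))
    (Φ : Set (ZeroAtInftyContinuousMap ℕ ℂ))
    (hΦ : Φ = {f | ∃ l : ℂ, ‖l‖ < 1 ∧ ∀ j, f j = l ^ j})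
    (S₀ : Set (ZeroAtInftyContinuousMap ℕ ℂ)) (hS₀ : S₀ = closure (convexHull ℝ Φ)) :
    ∃ y : ZeroAtInftyContinuousMap ℕ ℂ,
      (∀ j : ℕ, y j = ∫ t, t ^ j ∂ν) ∧ y ∈ S₀ ∧
      ‖∑' n : ℕ, y n * b n‖ =
        ⨆ x : S₀, ‖∑' n : ℕ, (x : ZeroAtInftyContinuousMap ℕ ℂ) n * b n‖ := by
  -- a.e. facts
  have haeE : ∀ᵐ t ∂ν, t ∈ E := by
    rw [MeasureTheory.ae_iff]
    simpa [Set.compl_def] using hν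
  have haeS : ∀ᵐ t ∂ν, ‖t‖ = 1 := by
    filter_upwards [haeE] with t ht
    have := hE ht
    rwa [Metric.mem_sphere, dist_zero_right] at this
  -- the candidate y
  set y : ZeroAtInftyContinuousMap ℕ ℂ :=
    { toFun := fun j => ∫ t, t ^ j ∂ν
      continuous_toFun := continuous_of_discreteTopology
      zero_at_infty' := by rw [Filter.cocompact_eq_cofinite, Nat.cofinite_eq_atTop]; exact hRaj } with hy
  have hyapp : ∀ j : ℕ, y j = ∫ t, t ^ j ∂ν := fun j => rfl
  have hynorm : ∀ j : ℕ, ‖y j‖ ≤ 1 := by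
    intro j
    rw [hyapp j]
    have := norm_integral_le_of_norm_le_const (μ := ν) (C := 1)
      (f := fun t : ℂ => t ^ j) (by filter_upwards [haeS] with t ht; simp [norm_pow, ht])
    simpa [measure_univ] using this
  -- y ∈ S₀
  have hymem : y ∈ S₀ := by
    rw [hS₀]
    have hcl : IsClosed (closure (convexHull ℝ Φ)) := isClosed_closure
    rw [← hcl.closure_eq]
    rw [Metric.mem_closure_iff]
    intro ε hε
    -- choose J
    obtain ⟨J, hJ⟩ := (Metric.tendsto_atTop.mp hRaj) (ε / 3) (by positivity)
    -- choose r
    set δ : ℝ := min (ε / (3 * (J + 1))) (1 / 2) with hδdef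
    have hδpos : 0 < δ := by
      apply lt_min _ (by norm_num)
      positivity
    have hδhalf : δ ≤ 1 / 2 := min_le_right _ _
    set r : ℝ := 1 - δ with hrdef
    have hr0 : 0 < r := by rw [hrdef]; linarith
    have hr1 : r < 1 := by rw [hrdef]; linarith
    have hrJ : 1 - r ^ J ≤ ε / 3 := by
      have hbern : 1 + (J : ℝ) * (-δ) ≤ (1 + (-δ)) ^ J :=
        one_add_mul_le_pow (by linarith) J
      have h1 : (1 : ℝ) - (J : ℝ) * δ ≤ r ^ J := by
        rw [hrdef]
        calc (1 : ℝ) - (J : ℝ) * δ = 1 + (J : ℝ) * (-δ) := by ring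
          _ ≤ (1 + (-δ)) ^ J := hbern
          _ = (1 - δ) ^ J := by ring_nf
      have h2 : (J : ℝ) * δ ≤ ε / 3 := by
        have hδ1 : δ ≤ ε / (3 * (J + 1)) := min_le_left _ _
        have hJ1 : (0 : ℝ) < (J : ℝ) + 1 := by positivity
        calc (J : ℝ) * δ ≤ (J : ℝ) * (ε / (3 * (J + 1))) := by
              apply mul_le_mul_of_nonneg_left hδ1 (Nat.cast_nonneg J)
          _ ≤ ((J : ℝ) + 1) * (ε / (3 * (J + 1))) := by
              apply mul_le_mul_of_nonneg_right (by linarith) (by positivity)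
          _ = ε / 3 := by field_simp
      linarith
    -- the approximating integral
    set F : ℂ → ZeroAtInftyContinuousMap ℕ ℂ := fun t => geo ((r : ℂ) * t) with hF
    have hnorm_rt : ∀ t : ℂ, ‖t‖ = 1 → ‖(r : ℂ) * t‖ < 1 := by
      intro t ht
      rw [norm_mul, Complex.norm_real, ht, Real.norm_eq_abs, abs_of_pos hr0, mul_one]
      exact hr1
    have hFcont : ContinuousOn F (Metric.sphere (0 : ℂ) 1) := by
      apply geo_continuousOn.comp ((continuous_const.mul continuous_id).continuousOn)
      intro t ht
      rw [Metric.mem_sphere, dist_zero_right] at ht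
      exact Metric.mem_ball.mpr (by rw [dist_zero_right]; exact hnorm_rt t ht)
    have haeSm : ∀ᵐ t ∂ν, t ∈ Metric.sphere (0 : ℂ) 1 := by
      filter_upwards [haeS] with t ht
      rwa [Metric.mem_sphere, dist_zero_right]
    haveI : SecondCountableTopologyEither ℂ (ZeroAtInftyContinuousMap ℕ ℂ) :=
      ⟨Or.inl inferInstance⟩
    have hmeas : AEStronglyMeasurable F ν := by
      have h1 := hFcont.aestronglyMeasurable (μ := ν) Metric.isClosed_sphere.measurableSet
      rwa [Measure.restrict_eq_self_of_ae_mem haeSm] at h1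
    have hFbound : ∀ᵐ t ∂ν, ‖F t‖ ≤ 1 := by
      filter_upwards [haeS] with t ht
      apply norm_le_of_forall zero_le_one
      intro j
      rw [hF, geo_apply (hnorm_rt t ht) j, norm_pow]
      exact pow_le_one₀ (norm_nonneg _) (hnorm_rt t ht).le
    have hFint : Integrable F ν :=
      ⟨hmeas, HasFiniteIntegral.of_bounded hFbound⟩
    refine ⟨∫ t, F t ∂ν, ?_, ?_⟩
    · -- the integral lies in the closed convex hull
      apply (convex_convexHull ℝ Φ).closure.integral_mem isClosed_closure _ hFint
      filter_upwards [haeS] with t ht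
      apply subset_closure
      apply subset_convexHull
      rw [hΦ]
      exact ⟨(r : ℂ) * t, hnorm_rt t ht, fun j => geo_apply (hnorm_rt t ht) j⟩
    · -- distance estimate
      have hcoords : ∀ j : ℕ, (∫ t, F t ∂ν) j = ((r : ℝ) : ℂ) ^ j * y j := by
        intro j
        have h1 : evalCLM j (∫ t, F t ∂ν) = ∫ t, evalCLM j (F t) ∂ν :=
          ((evalCLM j).integral_comp_comm hFint).symm
        rw [evalCLM_apply] at h1
        rw [h1]
        have h2 : ∫ t, evalCLM j (F t) ∂ν = ∫ t, ((r : ℂ) * t) ^ j ∂ν := by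
          apply integral_congr_ae
          filter_upwards [haeS] with t ht
          rw [evalCLM_apply, hF, geo_apply (hnorm_rt t ht) j]
        rw [h2, hyapp j]
        simp_rw [mul_pow]
        rw [MeasureTheory.integral_const_mul]
      rw [dist_eq_norm]
      have hεb : ‖y - ∫ t, F t ∂ν‖ ≤ ε / 3 := by
        apply norm_le_of_forall (by positivity)
        intro j
        have hco : (y - ∫ t, F t ∂ν) j = (1 - ((r : ℝ) : ℂ) ^ j) * y j := by
          simp only [ZeroAtInftyContinuousMap.coe_sub, Pi.sub_apply]
          rw [hcoords j]; ring
        rw [hco, norm_mul]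
        have hrj1 : r ^ j ≤ 1 := pow_le_one₀ hr0.le hr1.le
        have hn1 : ‖(1 : ℂ) - ((r : ℝ) : ℂ) ^ j‖ = 1 - r ^ j := by
          have : (1 : ℂ) - ((r : ℝ) : ℂ) ^ j = (((1 - r ^ j : ℝ)) : ℂ) := by push_cast; ring
          rw [this, Complex.norm_real, Real.norm_eq_abs, abs_of_nonneg (by linarith)]
        rw [hn1]
        rcases le_or_gt J j with hJj | hjJ
        · have := hJ j hJj
          rw [dist_zero_right] at this
          calc (1 - r ^ j) * ‖y j‖ ≤ 1 * ‖y j‖ := by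
                apply mul_le_mul_of_nonneg_right _ (norm_nonneg _)
                nlinarith [pow_nonneg hr0.le j]
            _ = ‖y j‖ := one_mul _
            _ ≤ ε / 3 := by rw [hyapp j]; exact this.le
        · have hjr : r ^ J ≤ r ^ j := pow_le_pow_of_le_one hr0.le hr1.le hjJ.le
          calc (1 - r ^ j) * ‖y j‖ ≤ (1 - r ^ j) * 1 := by
                apply mul_le_mul_of_nonneg_left (hynorm j) (by nlinarith)
            _ = 1 - r ^ j := mul_one _
            _ ≤ 1 - r ^ J := by linarith
            _ ≤ ε / 3 := hrJ
      calc ‖y - ∫ t, F t ∂ν‖ ≤ ε / 3 := hεb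
        _ < ε := by linarith
  -- the pairing functional
  set T : ZeroAtInftyContinuousMap ℕ ℂ →L[ℂ] ℂ := pairingL b hb with hT
  -- T y = β
  have hTy : T y = β := by
    rw [hT, pairingL_apply]
    have hint : ∀ n : ℕ, Integrable (fun t : ℂ => t ^ n * b n) ν := by
      intro n
      refine ⟨((continuous_pow n).mul continuous_const).aestronglyMeasurable, ?_⟩
      apply HasFiniteIntegral.of_bounded (C := ‖b n‖)
      filter_upwards [haeS] with t ht
      simp [norm_mul, norm_pow, ht]
    have hnorms : ∀ n : ℕ, (∫ t, ‖t ^ n * b n‖ ∂ν) = ‖b n‖ := by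
      intro n
      have : ∫ t, ‖t ^ n * b n‖ ∂ν = ∫ _t, ‖b n‖ ∂ν := by
        apply integral_congr_ae
        filter_upwards [haeS] with t ht
        simp [norm_mul, norm_pow, ht]
      rw [this, integral_const]
      simp [measure_univ]
    have hstep1 : ∀ n : ℕ, y n * b n = ∫ t, t ^ n * b n ∂ν := by
      intro n
      rw [hyapp n, MeasureTheory.integral_mul_const]
    calc ∑' n, y n * b n = ∑' n, ∫ t, t ^ n * b n ∂ν := by
          congr 1; funext n; exact hstep1 n
      _ = ∫ t, ∑' n, t ^ n * b n ∂ν := by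
          apply integral_tsum_of_summable_integral_norm hint
          simpa only [hnorms] using hb
      _ = ∫ t, fb t ∂ν := by
          apply integral_congr_ae
          apply Filter.Eventually.of_forall
          intro t
          show (∑' n, t ^ n * b n) = fb t
          rw [hfb t]
          exact tsum_congr fun n => mul_comm _ _
      _ = ∫ _t, β ∂ν := by
          apply integral_congr_ae
          filter_upwards [haeE] with t ht
          exact hpeak t ht
      _ = β := by rw [integral_const]; simp [measure_univ]
  -- bound on S₀
  have hbound : ∀ x ∈ S₀, ‖T x‖ ≤ ‖β‖ := by
    have hKconv : Convex ℝ (T ⁻¹' Metric.closedBall (0 : ℂ) ‖β‖) :=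
      (convex_closedBall (0 : ℂ) ‖β‖).linear_preimage (T.toLinearMap.restrictScalars ℝ)
    have hKclosed : IsClosed (T ⁻¹' Metric.closedBall (0 : ℂ) ‖β‖) :=
      Metric.isClosed_closedBall.preimage T.continuous
    have hΦK : Φ ⊆ T ⁻¹' Metric.closedBall (0 : ℂ) ‖β‖ := by
      intro x hx
      rw [hΦ] at hx
      obtain ⟨l, hl, hxl⟩ := hx
      have : T x = fb l := by
        rw [hT, pairingL_apply, hfb l]
        congr 1; funext n; rw [hxl n]; ring
      rw [Set.mem_preimage, Metric.mem_closedBall, dist_zero_right, this]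
      exact hsup l hl.le
    intro x hx
    rw [hS₀] at hx
    have := closure_minimal (convexHull_min hΦK hKconv) hKclosed hx
    rwa [Set.mem_preimage, Metric.mem_closedBall, dist_zero_right] at this
  -- conclude
  refine ⟨y, hyapp, hymem, ?_⟩
  have hne : Nonempty S₀ := ⟨⟨y, hymem⟩⟩
  have hrange : ∀ x : S₀, ‖∑' n : ℕ, (x : ZeroAtInftyContinuousMap ℕ ℂ) n * b n‖ ≤ ‖β‖ := by
    intro x
    have := hbound x x.2
    rwa [hT, pairingL_apply] at this
  have hbdd : BddAbove (Set.range fun x : S₀ =>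
      ‖∑' n : ℕ, (x : ZeroAtInftyContinuousMap ℕ ℂ) n * b n‖) := by
    refine ⟨‖β‖, ?_⟩
    rintro _ ⟨x, rfl⟩
    exact hrange x
  have hyval : ‖∑' n : ℕ, y n * b n‖ = ‖β‖ := by
    have : (∑' n : ℕ, y n * b n) = T y := by rw [hT, pairingL_apply]
    rw [this, hTy]
  apply le_antisymm
  · exact le_ciSup hbdd (⟨y, hymem⟩ : S₀)
  · apply ciSup_le
    intro x
    rw [hyval]
    exact hrange x
end
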